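/- Any clique in the exclusion graph of feasible interactions gives a lower bound on sample size: if U is a set of feasible t-wise interactions such that for every two distinct interactions I, I' in U there is no valid configuration covering both, then any sample S with t-wise coverage satisfies |U| ≤ |S|. -/

import Mathlib

/-- A configuration `c` covers an interaction `I` (a set of literals, each a pair
of a variable and a polarity) if every literal of `I` is true under `c`. -/
def Covers {α : Type*} (c : α → Bool) (I : Finset (α × Bool)) : Prop :=
  ∀ l ∈ I, c l.1 = l.2

/-- Any clique in the exclusion graph of feasible interactions gives a lower bound on
sample size: if `U` is a set of feasible `t`-wise interactions over the concrete
features such that no valid configuration covers two distinct members of `U`, then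
any sample `S` of valid configurations with `t`-wise coverage satisfies `|U| ≤ |S|`. -/
theorem stmt_0 {α : Type*} (valid : (α → Bool) → Prop) (conc : Set α) (t : ℕ)
    (U : Finset (Finset (α × Bool)))
    (hUt : ∀ I ∈ U, I.card = t ∧ ∀ l ∈ I, l.1 ∈ conc)
    (hUfeas : ∀ I ∈ U, ∃ c, valid c ∧ Covers c I)
    (hUexcl : ∀ I ∈ U, ∀ I' ∈ U, I ≠ I' →
      ¬∃ c, valid c ∧ Covers c I ∧ Covers c I')
    (S : Finset (α → Bool)) (hSvalid : ∀ c ∈ S, valid c)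
    (hScov : ∀ I : Finset (α × Bool), I.card = t → (∀ l ∈ I, l.1 ∈ conc) →
      (∃ c, valid c ∧ Covers c I) → ∃ c ∈ S, Covers c I) :
    U.card ≤ S.card := by
  classical
  have hex : ∀ I ∈ U, ∃ c ∈ S, Covers c I := fun I hI =>
    hScov I (hUt I hI).1 (hUt I hI).2 (hUfeas I hI)
  choose f hfS hfC using hex
  apply Finset.card_le_card_of_injOn (fun I => if h : I ∈ U then f I h else Classical.arbitrary _)
  · intro I hI; rw [Finset.mem_coe] at hI; simp only [hI, dif_pos, Finset.mem_coe]; exact hfS I hI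
  · intro I hI I' hI' heq
    simp only [Finset.mem_coe] at hI hI'
    simp only [hI, hI', dif_pos] at heq
    by_contra hne
    exact hUexcl I hI I' hI' hne ⟨f I hI, hSvalid _ (hfS I hI), hfC I hI, heq ▸ hfC I' hI'⟩
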